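/- For integer vectors d, u ∈ Z^m with d_i < u_i (or more generally d_i ≤ u_i), and any subset I ⊆ [1,m], the cardinality of the intersection ∩_{i∈I} {j ∈ Z : d_i+1 ≤ j ≤ u_i} equals max(0, min_{i∈I} u_i − max_{i∈I} d_i), which in turn equals min{IM^+_{i,j} : i,j ∈ I}, where IM^+_{i,j} = max(0, min(u_i,u_j) − max(d_i,d_j)). -/

import Mathlib

/-- For integer vectors `d, u` with `d_i ≤ u_i` and a nonempty `I ⊆ [1,m]`, the cardinality of
`∩_{i∈I} [d_i+1, u_i]` (integer intervals) equals `max(0, min_{i∈I} u_i − max_{i∈I} d_i)`,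
which equals `min{IM⁺_{i,j} : i,j ∈ I}` where `IM⁺_{i,j} = max(0, min(u_i,u_j) − max(d_i,d_j))`. -/
theorem stmt10 {m : ℕ} (d u : Fin m → ℤ) (hdu : ∀ i, d i ≤ u i)
    (I : Finset (Fin m)) (hI : I.Nonempty) :
    (((I.inf' hI fun i => Finset.Icc (d i + 1) (u i)).card : ℤ)
        = max 0 (I.inf' hI u - I.sup' hI d)) ∧
    (max 0 (I.inf' hI u - I.sup' hI d)
        = (I ×ˢ I).inf' (hI.product hI)
            (fun p => max 0 (min (u p.1) (u p.2) - max (d p.1) (d p.2)))) := by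
  have hset : I.inf' hI (fun i => Finset.Icc (d i + 1) (u i))
      = Finset.Icc (I.sup' hI d + 1) (I.inf' hI u) := by
    induction hI using Finset.Nonempty.cons_induction with
    | singleton i => simp
    | cons i s hi hs ih =>
        rw [Finset.inf'_cons (H := hs), Finset.sup'_cons (H := hs), Finset.inf'_cons (H := hs), ih]
        ext j
        simp only [Finset.inf_eq_inter, Finset.mem_inter, Finset.mem_Icc,
          max_def, min_def]
        omega
  constructor
  · rw [hset, Int.card_Icc]
    omega
  · apply le_antisymm
    · apply Finset.le_inf'
      intro p hp
      rw [Finset.mem_product] at hp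
      have h1 := Finset.inf'_le u hp.1
      have h2 := Finset.inf'_le u hp.2
      have h3 := Finset.le_sup' d hp.1
      have h4 := Finset.le_sup' d hp.2
      simp only [min_def, max_def] at *
      split_ifs <;> omega
    · obtain ⟨i0, hi0, hui0⟩ := Finset.exists_mem_eq_inf' hI u
      obtain ⟨j0, hj0, hdj0⟩ := Finset.exists_mem_eq_sup' hI d
      have hmem : (i0, j0) ∈ I ×ˢ I := Finset.mem_product.2 ⟨hi0, hj0⟩
      have := Finset.inf'_le (fun p => max 0 (min (u p.1) (u p.2) - max (d p.1) (d p.2))) hmem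
      refine le_trans this ?_
      simp only [min_def, max_def] at *
      split_ifs <;> omega
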